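/- The velocity u(x,t) = (c₁+sin(x+t))⁻¹ − 1 with surface elevation h_E(x,t) = −(2g)⁻¹(c₁+sin(x+t))⁻² satisfies the convective Euler equation ∂u/∂t + u ∂u/∂x + g ∂h_E/∂x = 0 for all x, t ∈ ℝ, when c₁ > 1 and g ≠ 0. -/

import Mathlib

/-- The explicit velocity and surface elevation satisfy the convective Euler
equation. -/
theorem stmt_6 (c₁ g : ℝ) (hc : 1 < c₁) (hg : g ≠ 0)
    (u h_E : ℝ → ℝ → ℝ)
    (hu : ∀ x t, u x t = (c₁ + Real.sin (x + t))⁻¹ - 1)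
    (hE : ∀ x t, h_E x t = -((2 * g)⁻¹ * (c₁ + Real.sin (x + t))⁻¹ ^ 2)) :
    ∀ x t : ℝ, deriv (fun τ => u x τ) t
      + u x t * deriv (fun y => u y t) x
      + g * deriv (fun y => h_E y t) x = 0 := by
  intro x t
  have hs : ∀ y : ℝ, c₁ + Real.sin y ≠ 0 := fun y => by
    nlinarith [Real.neg_one_le_sin y]
  set s : ℝ := c₁ + Real.sin (x + t) with hsdef
  have hs0 : s ≠ 0 := hs (x + t)
  have hinner_t : HasDerivAt (fun τ : ℝ => c₁ + Real.sin (x + τ)) (Real.cos (x + t)) t := by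
    have := ((Real.hasDerivAt_sin (x + t)).comp t
      ((hasDerivAt_id t).const_add x)).const_add c₁
    simpa using this
  have hinner_x : HasDerivAt (fun y : ℝ => c₁ + Real.sin (y + t)) (Real.cos (x + t)) x := by
    have := ((Real.hasDerivAt_sin (x + t)).comp x
      ((hasDerivAt_id x).add_const t)).const_add c₁
    simpa using this
  have hinv_t : HasDerivAt (fun τ : ℝ => (c₁ + Real.sin (x + τ))⁻¹)
      (-Real.cos (x + t) / s ^ 2) t := hinner_t.inv hs0
  have hinv_x : HasDerivAt (fun y : ℝ => (c₁ + Real.sin (y + t))⁻¹)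
      (-Real.cos (x + t) / s ^ 2) x := hinner_x.inv hs0
  have hut : HasDerivAt (fun τ : ℝ => u x τ) (-Real.cos (x + t) / s ^ 2) t := by
    have : (fun τ : ℝ => u x τ) = fun τ : ℝ => (c₁ + Real.sin (x + τ))⁻¹ - 1 := by
      funext τ; exact hu x τ
    rw [this]; exact hinv_t.sub_const 1
  have hux : HasDerivAt (fun y : ℝ => u y t) (-Real.cos (x + t) / s ^ 2) x := by
    have : (fun y : ℝ => u y t) = fun y : ℝ => (c₁ + Real.sin (y + t))⁻¹ - 1 := by
      funext y; exact hu y t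
    rw [this]; exact hinv_x.sub_const 1
  have hhx : HasDerivAt (fun y : ℝ => h_E y t)
      (-( (2 * g)⁻¹ * (2 * s⁻¹ * (-Real.cos (x + t) / s ^ 2)))) x := by
    have : (fun y : ℝ => h_E y t)
        = fun y : ℝ => -((2 * g)⁻¹ * (c₁ + Real.sin (y + t))⁻¹ ^ 2) := by
      funext y; exact hE y t
    rw [this]
    have hpow : HasDerivAt (fun y : ℝ => (c₁ + Real.sin (y + t))⁻¹ ^ 2)
        (2 * s⁻¹ * (-Real.cos (x + t) / s ^ 2)) x := by
      have := hinv_x.pow 2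
      exact this.congr_deriv (by rw [hsdef]; norm_num)
    exact ((hpow.const_mul ((2 * g)⁻¹)).neg)
  rw [hut.deriv, hux.deriv, hhx.deriv, hu x t, ← hsdef]
  field_simp
  ring
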